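/- Let a < b, and define for j, k ∈ ℕ and x₁ ∈ [a,b] the integral M_{k,j}(x₁,b) = (2/(b−a))∫_{x₁}^b e^{ijπ(x−a)/(b−a)} cos(kπ(x−a)/(b−a)) dx. Then M_{k,j}(x₁,b) = M^c_{j+k} + M^s_{j−k} where M^c_m depends only on j+k and M^s_m only on j−k; i.e., the matrix (M_{k,j}) is the sum of a Hankel matrix and a Toeplitz matrix. -/

import Mathlib

open Real Complex

/-- Hankel-plus-Toeplitz structure of the COS matrix: the entries
`M_{k,j}(x₁,b) = (2/(b−a))∫_{x₁}^b e^{ijπ(x−a)/(b−a)} cos(kπ(x−a)/(b−a)) dx`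
decompose as `M_{k,j} = M^c_{j+k} + M^s_{j−k}`, i.e. the matrix is the sum of a
Hankel matrix and a Toeplitz matrix. -/
theorem cos_matrix_hankel_plus_toeplitz (a b x₁ : ℝ) (hab : a < b)
    (hx₁ : x₁ ∈ Set.Icc a b) :
    ∃ (Mc : ℕ → ℂ) (Ms : ℤ → ℂ), ∀ j k : ℕ,
      (2 / (b - a) : ℂ) *
          ∫ x in x₁..b,
            Complex.exp (Complex.I * j * π * (x - a) / (b - a)) *
              Complex.cos (k * π * (x - a) / (b - a)) =
        Mc (j + k) + Ms ((j : ℤ) - (k : ℤ)) := by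
  have hba : (b - a : ℂ) ≠ 0 := by
    have : (b - a : ℝ) ≠ 0 := sub_ne_zero.mpr hab.ne'
    exact_mod_cast this
  refine ⟨fun n => (1 / (b - a) : ℂ) * ∫ x in x₁..b,
      Complex.exp (Complex.I * n * π * (x - a) / (b - a)),
    fun m => (1 / (b - a) : ℂ) * ∫ x in x₁..b,
      Complex.exp (Complex.I * m * π * (x - a) / (b - a)), fun j k => ?_⟩
  have key : ∀ x : ℝ,
      Complex.exp (Complex.I * j * π * (x - a) / (b - a)) *
        Complex.cos (k * π * (x - a) / (b - a)) =
      (Complex.exp (Complex.I * (j + k : ℕ) * π * (x - a) / (b - a)) +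
        Complex.exp (Complex.I * ((j : ℤ) - (k : ℤ)) * π * (x - a) / (b - a))) / 2 := by
    intro x
    have h2 : ∀ p q r : ℂ, p * ((q + r) / 2) = (p * q + p * r) / 2 := fun p q r => by ring
    rw [Complex.cos, h2, ← Complex.exp_add, ← Complex.exp_add]
    congr 2 <;> · push_cast; ring_nf
  rw [intervalIntegral.integral_congr (g := fun x =>
      (Complex.exp (Complex.I * (j + k : ℕ) * π * (x - a) / (b - a)) +
        Complex.exp (Complex.I * ((j : ℤ) - (k : ℤ)) * π * (x - a) / (b - a))) / 2)
      (fun x _ => key x)]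
  rw [intervalIntegral.integral_div, intervalIntegral.integral_add]
  · push_cast
    field_simp
  · apply Continuous.intervalIntegrable; fun_prop
  · apply Continuous.intervalIntegrable; fun_prop
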